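/- Comparison lemma: if u, û : [0,∞) → ℝ are differentiable with u(0) = û(0) = 0, u'(t) = -(u(t) - r₁(t))(u(t) - r₂(t)), û'(t) = -(û(t) - r̂(t))·(√2 - 1), where r₁(t) ≥ r̂(t) and u(t) - r₂(t) ≥ √2 - 1 for all t ≥ 0, and u ≤ r₁ pointwise, then û(t) ≤ u(t) for all t ≥ 0. -/

import Mathlib

open Real

theorem stmt_18 (r₁ r₂ rh u v : ℝ → ℝ)
    (hr₁c : ContinuousOn r₁ (Set.Ici 0)) (hr₂c : ContinuousOn r₂ (Set.Ici 0))
    (hrhc : ContinuousOn rh (Set.Ici 0))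
    (hu : ∀ t ≥ (0:ℝ), HasDerivAt u (-((u t - r₁ t) * (u t - r₂ t))) t)
    (hv : ∀ t ≥ (0:ℝ), HasDerivAt v (-((v t - rh t) * (Real.sqrt 2 - 1))) t)
    (hu0 : u 0 = 0) (hv0 : v 0 = 0)
    (hge : ∀ t ≥ (0:ℝ), rh t ≤ r₁ t)
    (hgap : ∀ t ≥ (0:ℝ), Real.sqrt 2 - 1 ≤ u t - r₂ t)
    (hle : ∀ t ≥ (0:ℝ), u t ≤ r₁ t) :
    ∀ t ≥ (0:ℝ), v t ≤ u t := by
  set K := Real.sqrt 2 - 1 with hK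
  have hKpos : 0 < K := by
    have h1 : (1:ℝ) < Real.sqrt 2 := by
      have := Real.sqrt_lt_sqrt (by norm_num : (0:ℝ) ≤ 1) (by norm_num : (1:ℝ) < 2)
      simpa using this
    simp only [hK]; linarith
  set g : ℝ → ℝ := fun s => Real.exp (K * s) * (v s - u s) with hg
  have hderiv : ∀ s ≥ (0:ℝ), HasDerivAt g
      (Real.exp (K * s) * (K * (v s - u s) +
        (-((v s - rh s) * K) - -((u s - r₁ s) * (u s - r₂ s))))) s := by
    intro s hs
    have h1 : HasDerivAt (fun x : ℝ => Real.exp (K * x)) (Real.exp (K * s) * K) s := by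
      have hlin : HasDerivAt (fun x : ℝ => K * x) K s := by
        simpa using (hasDerivAt_id s).const_mul K
      exact (Real.hasDerivAt_exp (K * s)).comp s hlin
    have h2 : HasDerivAt (fun x => v x - u x)
        (-((v s - rh s) * K) - -((u s - r₁ s) * (u s - r₂ s))) s := (hv s hs).sub (hu s hs)
    have := h1.mul h2
    refine this.congr_deriv ?_
    ring
  have hanti : AntitoneOn g (Set.Ici 0) := by
    apply antitoneOn_of_deriv_nonpos (convex_Ici 0)
    · intro s hs
      exact ((hderiv s hs).continuousAt).continuousWithinAt
    · intro s hs
      rw [interior_Ici] at hs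
      exact ((hderiv s hs.le).differentiableAt).differentiableWithinAt
    · intro s hs
      rw [interior_Ici] at hs
      have hs' := (Set.mem_Ioi.mp hs).le
      rw [(hderiv s hs').deriv]
      have hA : 0 < Real.exp (K * s) := Real.exp_pos _
      have h1 := hge s hs'
      have h2 := hgap s hs'
      have h3 := hle s hs'
      have hmul : (r₁ s - u s) * K ≤ (r₁ s - u s) * (u s - r₂ s) :=
        mul_le_mul_of_nonneg_left h2 (by linarith)
      have hmul2 : K * rh s ≤ K * r₁ s := mul_le_mul_of_nonneg_left h1 hKpos.le
      have key : K * (v s - u s) +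
          (-((v s - rh s) * K) - -((u s - r₁ s) * (u s - r₂ s))) ≤ 0 := by nlinarith
      nlinarith
  intro t ht
  have h0 : g 0 = 0 := by simp [hg, hu0, hv0]
  have hle' := hanti Set.self_mem_Ici (Set.mem_Ici.2 ht) ht
  rw [h0] at hle'
  have hA : 0 < Real.exp (K * t) := Real.exp_pos _
  simp only [hg] at hle'
  nlinarith [hle']
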